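/- Let 0 < ω₁ < … < ω_p be real numbers. There exist ε₃ > 0 and C₃ > 0 (depending only on the ω_j) with the following property. Let T₀ ∈ (0,+∞], and for j = 1,…,p let α_j, β_j ∈ C¹([0,T₀), ℝ). Set γ(t) = √( Σ_{j=1}^p ω_j²α_j(t)² + β_j(t)² ) and assume ‖γ‖_∞ = sup_{t∈[0,T₀)} γ(t) < ∞, and for all j and all t ∈ [0,T₀): |α_j'(t) − β_j(t)| ≤ ε₃ γ(t) and |β_j'(t) − ω_j² α_j(t)| ≤ ε₃ γ(t). Then ∫₀^{T₀} γ(t) dt ≤ C₃ ‖γ‖_∞; moreover, if T₀ = +∞ then e^{(ω₁/2)t} γ(t) → 0 as t → +∞. -/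

import Mathlib

open MeasureTheory Real Filter Topology
open scoped ENNReal InnerProductSpace BigOperators

noncomputable section

/-- Points of `ℝ^N` (with its Euclidean structure and Lebesgue measure). -/
abbrev Pt (N : ℕ) : Type := EuclideanSpace ℝ (Fin N)

/-- Partial derivative in the `i`-th coordinate direction (pointwise). -/
def pdi {N : ℕ} (i : Fin N) (f : Pt N → ℝ) (x : Pt N) : ℝ :=
  fderiv ℝ f x (EuclideanSpace.single i 1)

/-- The Laplacian (pointwise). -/
def lap {N : ℕ} (f : Pt N → ℝ) (x : Pt N) : ℝ :=
  ∑ i : Fin N, pdi i (pdi i f) x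

/-- Smooth, compactly supported test functions. -/
def IsTest {N : ℕ} (φ : Pt N → ℝ) : Prop :=
  ContDiff ℝ (⊤ : ℕ∞) φ ∧ HasCompactSupport φ

/-- The critical exponent `4/(N-2)`. -/
def critExp (N : ℕ) : ℝ := 4 / ((N : ℝ) - 2)

/-- The exponent `2N/(N-2)`. -/
def critExp' (N : ℕ) : ℝ := 2 * (N : ℝ) / ((N : ℝ) - 2)

/-- Homogeneous `Ḣ¹` (semi)norm, computed from the pointwise differential. -/
def H1norm {N : ℕ} (f : Pt N → ℝ) : ℝ :=
  (eLpNorm (fun x => ‖fderiv ℝ f x‖) 2 volume).toReal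

/-- `L²`-norm. -/
def L2norm {N : ℕ} (f : Pt N → ℝ) : ℝ :=
  (eLpNorm f 2 volume).toReal

/-- Membership in `Ḣ¹(ℝ^N)` (`N ≥ 3`): we model `Ḣ¹` as the set of (everywhere
differentiable representatives of) functions in `L^{2N/(N-2)}` whose gradient is in `L²`. -/
def MemH1 {N : ℕ} (f : Pt N → ℝ) : Prop :=
  Differentiable ℝ f ∧ MemLp f (ENNReal.ofReal (critExp' N)) volume ∧
    MemLp (fun x => ‖fderiv ℝ f x‖) 2 volume

/-- `Q ∈ Σ`: the nonzero `Ḣ¹` distributional solutions of `-ΔQ = |Q|^{4/(N-2)} Q` on `ℝ^N`. -/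
def InSigma (N : ℕ) (Q : Pt N → ℝ) : Prop :=
  Q ≠ 0 ∧ MemH1 Q ∧
    ∀ φ : Pt N → ℝ, IsTest φ →
      (∫ x, Q x * lap φ x) = - ∫ x, |Q x| ^ critExp N * Q x * φ x

/-- `f ∈ Z_Q`: `f ∈ Ḣ¹` and `L_Q f = 0` in the sense of distributions, where
`L_Q = -Δ - ((N+2)/(N-2))|Q|^{4/(N-2)}` is the linearized operator at `Q`. -/
def InZ (N : ℕ) (Q f : Pt N → ℝ) : Prop :=
  MemH1 f ∧
    ∀ φ : Pt N → ℝ, IsTest φ →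
      (∫ x, f x * lap φ x)
        = - (((N : ℝ) + 2) / ((N : ℝ) - 2)) * ∫ x, |Q x| ^ critExp N * f x * φ x

/-- `L_Q Y = -ω² Y` in the sense of distributions. -/
def IsEigen (N : ℕ) (Q Y : Pt N → ℝ) (ω : ℝ) : Prop :=
  ∀ φ : Pt N → ℝ, IsTest φ →
    (∫ x, Y x * lap φ x)
      = ∫ x, (ω ^ 2 * Y x - ((N : ℝ) + 2) / ((N : ℝ) - 2) * |Q x| ^ critExp N * Y x) * φ x

/-- The generators of `Z̃_Q` coming from the invariances of the stationary equation. -/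
def tildeGens (N : ℕ) (Q : Pt N → ℝ) : Set (Pt N → ℝ) :=
  { g | (∃ j : Fin N, g = fun x : Pt N =>
            (2 - (N : ℝ)) * x j * Q x + ‖x‖ ^ 2 * pdi j Q x
              - 2 * x j * ∑ i : Fin N, x i * pdi i Q x) ∨
        (∃ j : Fin N, g = pdi j Q) ∨
        (∃ j k : Fin N, j < k ∧ g = fun x : Pt N => x j * pdi k Q x - x k * pdi j Q x) ∨
        g = fun x : Pt N => ((N : ℝ) - 2) / 2 * Q x + ∑ i : Fin N, x i * pdi i Q x }

/-- The nondegeneracy condition (ND): `Z_Q = Z̃_Q`. -/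
def NonDeg (N : ℕ) (Q : Pt N → ℝ) : Prop :=
  {f : Pt N → ℝ | InZ N Q f} = (Submodule.span ℝ (tildeGens N Q) : Set (Pt N → ℝ))

/-- Time derivative `∂_t u`. -/
def dtu {N : ℕ} (u : ℝ → Pt N → ℝ) (t : ℝ) (x : Pt N) : ℝ :=
  deriv (fun s => u s x) t

/-- The conserved energy of a pair `(f, g) ∈ Ḣ¹ × L²`. -/
def energyPair (N : ℕ) (f g : Pt N → ℝ) : ℝ :=
  (1 / 2) * (∫ x, ‖fderiv ℝ f x‖ ^ 2) + (1 / 2) * (∫ x, (g x) ^ 2)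
    - (((N : ℝ) - 2) / (2 * (N : ℝ))) * ∫ x, |f x| ^ critExp' N

/-- The conserved momentum of a pair `(f, g) ∈ Ḣ¹ × L²`. -/
def momentumPair (N : ℕ) (f g : Pt N → ℝ) : Pt N :=
  ∫ x, g x • gradient f x

/-- `u` is a (finite-energy) solution of the focusing energy-critical wave equation
`∂_t² u - Δu = |u|^{4/(N-2)} u` on the time interval `(Tm, Tp) ∋ 0`: the equation holds
in the sense of distributions on the spacetime strip, `(u, ∂_t u)` has finite energy at
each time and depends continuously (in `Ḣ¹ × L²`) on time. -/
structure IsSolOn (N : ℕ) (u : ℝ → Pt N → ℝ) (Tm Tp : EReal) : Prop where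
  lt_zero : Tm < (0 : EReal)
  zero_lt : (0 : EReal) < Tp
  reg : ∀ t : ℝ, Tm < (t : EReal) → (t : EReal) < Tp →
    MemH1 (u t) ∧ MemLp (dtu u t) 2 volume
  eq : ∀ φ : ℝ → Pt N → ℝ,
    ContDiff ℝ (⊤ : ℕ∞) (fun p : ℝ × Pt N => φ p.1 p.2) →
    HasCompactSupport (fun p : ℝ × Pt N => φ p.1 p.2) →
    (∀ t : ℝ, ¬ (Tm < (t : EReal) ∧ (t : EReal) < Tp) → φ t = 0) →
    (∫ t : ℝ, ∫ x : Pt N, u t x *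
        (deriv (fun s => deriv (fun r => φ r x) s) t - lap (φ t) x))
      = ∫ t : ℝ, ∫ x : Pt N, |u t x| ^ critExp N * u t x * φ t x
  cont : ∀ t₀ : ℝ, Tm < (t₀ : EReal) → (t₀ : EReal) < Tp → ∀ ε : ℝ, 0 < ε →
    ∃ δ : ℝ, 0 < δ ∧ ∀ t : ℝ, Tm < (t : EReal) → (t : EReal) < Tp → |t - t₀| < δ →
      H1norm (fun x => u t x - u t₀ x) + L2norm (fun x => dtu u t x - dtu u t₀ x) < ε

/-- `u` is a solution on its maximal interval of existence `(Tm, Tp)`. -/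
def IsMaxSol (N : ℕ) (u : ℝ → Pt N → ℝ) (Tm Tp : EReal) : Prop :=
  IsSolOn N u Tm Tp ∧
    ∀ (v : ℝ → Pt N → ℝ) (Tm' Tp' : EReal), IsSolOn N v Tm' Tp' →
      Tm' ≤ Tm → Tp ≤ Tp' →
      (∀ t : ℝ, Tm < (t : EReal) → (t : EReal) < Tp → v t = u t) →
      Tm' = Tm ∧ Tp' = Tp

/-- `u` is a nonzero solution. -/
def NonzeroSol (N : ℕ) (u : ℝ → Pt N → ℝ) (Tm Tp : EReal) : Prop :=
  ∃ (t : ℝ) (x : Pt N), Tm < (t : EReal) ∧ (t : EReal) < Tp ∧ u t x ≠ 0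

/-- The modulated pair
`(λ(t)^{N/2-1} u(t, λ(t)·+x(t)), λ(t)^{N/2} ∂_t u(t, λ(t)·+x(t)))`. -/
def modPair (N : ℕ) (u : ℝ → Pt N → ℝ) (lam : ℝ → ℝ) (c : ℝ → Pt N) (t : ℝ) :
    (Pt N → ℝ) × (Pt N → ℝ) :=
  (fun y => lam t ^ ((N : ℝ) / 2 - 1) * u t (lam t • y + c t),
   fun y => lam t ^ ((N : ℝ) / 2) * dtu u t (lam t • y + c t))

/-- Distance of two pairs in `Ḣ¹ × L²`. -/
def pairDist {N : ℕ} (P R : (Pt N → ℝ) × (Pt N → ℝ)) : ℝ :=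
  H1norm (fun x => P.1 x - R.1 x) + L2norm (fun x => P.2 x - R.2 x)

/-- The compactness property, with modulation parameters `lam, c`: every sequence of times
admits a subsequence along which the modulated pairs are Cauchy in `Ḣ¹ × L²`
(i.e. the modulated trajectory is totally bounded, equivalently precompact, in `Ḣ¹ × L²`). -/
def HasCP (N : ℕ) (u : ℝ → Pt N → ℝ) (Tm Tp : EReal) (lam : ℝ → ℝ) (c : ℝ → Pt N) : Prop :=
  (∀ t : ℝ, Tm < (t : EReal) → (t : EReal) < Tp → 0 < lam t) ∧
    ∀ tseq : ℕ → ℝ, (∀ n, Tm < (tseq n : EReal) ∧ (tseq n : EReal) < Tp) →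
      ∃ σ : ℕ → ℕ, StrictMono σ ∧
        ∀ ε : ℝ, 0 < ε → ∃ M : ℕ, ∀ i j : ℕ, M ≤ i → M ≤ j →
          pairDist (modPair N u lam c (tseq (σ i))) (modPair N u lam c (tseq (σ j))) < ε

/-- The solitary wave `Q_ℓ(t, x) = Q_ℓ(0, x - tℓ)`, the Lorentz transform of the
stationary solution `Q` with velocity `ℓ`, `|ℓ| < 1`. -/
def solWave (N : ℕ) (Q : Pt N → ℝ) (l : Pt N) (t : ℝ) (x : Pt N) : ℝ :=
  Q (((-t / Real.sqrt (1 - ‖l‖ ^ 2)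
      + 1 / ‖l‖ ^ 2 * (1 / Real.sqrt (1 - ‖l‖ ^ 2) - 1) * ⟪l, x⟫_ℝ) • l) + x)

/-- The ground state `W(x) = (1 + |x|²/(N(N-2)))^{-(N-2)/2}`. -/
def groundW (N : ℕ) (x : Pt N) : ℝ :=
  (1 + ‖x‖ ^ 2 / ((N : ℝ) * ((N : ℝ) - 2))) ^ (-(((N : ℝ) - 2) / 2))

/-- Distance (in `Ḣ¹`) to the set `Σ` of stationary solutions. -/
def distSigma (N : ℕ) (f : Pt N → ℝ) : ℝ :=
  sInf {r : ℝ | ∃ R : Pt N → ℝ, InSigma N R ∧ r = H1norm (fun x => f x - R x)}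

/-- The parameter space `ℝ^{N'}`, `N' = 2N + 1 + N(N-1)/2`, for the transformations `θ_A`:
a parameter is `A = (s, a, b, c)` where the rotation part `c` is recorded as the
(antisymmetric) matrix it generates. -/
abbrev ParamSpace (N : ℕ) : Type :=
  ℝ × Pt N × Pt N × Matrix (Fin N) (Fin N) ℝ

/-- The rotation part of the parameter is an antisymmetric matrix. -/
def IsSkewParam {N : ℕ} (A : ParamSpace N) : Prop :=
  A.2.2.2.transpose = -A.2.2.2

/-- The size `|A|` of a parameter `A ∈ ℝ^{N'}`. -/
def pnormA {N : ℕ} (A : ParamSpace N) : ℝ :=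
  |A.1| + ‖A.2.1‖ + ‖A.2.2.1‖ + Real.sqrt (∑ i : Fin N, ∑ j : Fin N, (A.2.2.2 i j) ^ 2)

/-- The transformation `θ_A`, `A = (s, a, b, c)`:
`θ_A(f)(x) = e^{(N-2)s/2} |x/|x| - a|x||^{2-N} f(b + e^s P_c (x - a|x|²)/(1 - 2⟨a,x⟩ + |a|²|x|²))`. -/
def theta {N : ℕ} (A : ParamSpace N) (f : Pt N → ℝ) (x : Pt N) : ℝ :=
  Real.exp (((N : ℝ) - 2) * A.1 / 2) * ‖‖x‖⁻¹ • x - ‖x‖ • A.2.1‖ ^ (2 - (N : ℝ)) *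
    f (A.2.2.1 + (1 - 2 * ⟪A.2.1, x⟫_ℝ + ‖A.2.1‖ ^ 2 * ‖x‖ ^ 2)⁻¹ •
        (Real.exp A.1 •
          (Matrix.toEuclideanLin (NormedSpace.exp A.2.2.2)) (x - ‖x‖ ^ 2 • A.2.1)))

/-- The adjoint `(θ_A^{-1})^*` of the inverse of `θ_A`:
`(θ_A^{-1})^*(g)(x) = e^{(N+2)s/2} |x/|x| - a|x||^{-(N+2)} g(b + e^s P_c (x - a|x|²)/(1 - 2⟨a,x⟩ + |a|²|x|²))`. -/
def thetaInvAdj {N : ℕ} (A : ParamSpace N) (g : Pt N → ℝ) (x : Pt N) : ℝ :=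
  Real.exp (((N : ℝ) + 2) * A.1 / 2) * ‖‖x‖⁻¹ • x - ‖x‖ • A.2.1‖ ^ (-((N : ℝ) + 2)) *
    g (A.2.2.1 + (1 - 2 * ⟪A.2.1, x⟫_ℝ + ‖A.2.1‖ ^ 2 * ‖x‖ ^ 2)⁻¹ •
        (Real.exp A.1 •
          (Matrix.toEuclideanLin (NormedSpace.exp A.2.2.2)) (x - ‖x‖ ^ 2 • A.2.1)))

/-- The map `ψ_a = J ∘ T_{-a} ∘ J : x ↦ (x - a|x|²)/(1 - 2⟨a,x⟩ + |a|²|x|²)`. -/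
def psiMap {N : ℕ} (a z : Pt N) : Pt N :=
  (1 - 2 * ⟪a, z⟫_ℝ + ‖a‖ ^ 2 * ‖z‖ ^ 2)⁻¹ • (z - ‖z‖ ^ 2 • a)

/-- The inverse transformation `θ_A^{-1} = Θ_{ψ_{-a} ∘ D_{e^{-s}} ∘ P_{-c} ∘ T_{-b}}`. -/
def thetaInv {N : ℕ} (A : ParamSpace N) (g : Pt N → ℝ) (y : Pt N) : ℝ :=
  Real.exp (-(((N : ℝ) - 2) * A.1 / 2)) *
    ‖‖(Real.exp (-A.1) •
          (Matrix.toEuclideanLin (NormedSpace.exp (-A.2.2.2))) (y - A.2.2.1))‖⁻¹ •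
        (Real.exp (-A.1) •
          (Matrix.toEuclideanLin (NormedSpace.exp (-A.2.2.2))) (y - A.2.2.1))
      - ‖(Real.exp (-A.1) •
          (Matrix.toEuclideanLin (NormedSpace.exp (-A.2.2.2))) (y - A.2.2.1))‖ •
        (-A.2.1)‖ ^ (2 - (N : ℝ)) *
    g (psiMap (-A.2.1)
        (Real.exp (-A.1) •
          (Matrix.toEuclideanLin (NormedSpace.exp (-A.2.2.2))) (y - A.2.2.1)))

/-- The Kelvin transform `Q̃(x) = |x|^{2-N} Q(x/|x|²)`. -/
def kelvin (N : ℕ) (Q : Pt N → ℝ) (x : Pt N) : ℝ :=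
  ‖x‖ ^ (2 - (N : ℝ)) * Q ((‖x‖ ^ 2)⁻¹ • x)

/-- The `H^{-1}`-norm, realized by duality against `H¹` test functions. -/
def Hm1norm (N : ℕ) (f : Pt N → ℝ) : ℝ :=
  sSup {r : ℝ | ∃ φ : Pt N → ℝ, IsTest φ ∧ L2norm φ + H1norm φ ≤ 1 ∧ r = ∫ x, f x * φ x}

/-- The quadratic form `Φ_Q(f) = ½∫|∇f|² - ((N+2)/(2(N-2)))∫|Q|^{4/(N-2)} f²` of `L_Q`. -/
def PhiQ (N : ℕ) (Q f : Pt N → ℝ) : ℝ :=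
  (1 / 2) * (∫ x, ‖fderiv ℝ f x‖ ^ 2)
    - (((N : ℝ) + 2) / (2 * ((N : ℝ) - 2))) * ∫ x, |Q x| ^ critExp N * (f x) ^ 2

/-- The standard spectral setup at a stationary solution `Q`:
`Y₁, …, Y_p` is an `L²`-orthonormal family of eigenfunctions of `L_Q` spanning all its
negative spectral subspaces, with eigenvalues `-ω₁² ≤ … ≤ -ω_p² < 0`; `Z₁, …, Z_m` is a
basis of the kernel `Z_Q`; and `E₁, …, E_m ∈ C₀^∞` satisfy `∫E_j Y_k = 0` and
`∫E_j Z_k = δ_{jk}`. -/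
structure SetupQ (N : ℕ) (Q : Pt N → ℝ) {p m : ℕ} (Y : Fin p → Pt N → ℝ)
    (omg : Fin p → ℝ) (Z : Fin m → Pt N → ℝ) (E : Fin m → Pt N → ℝ) : Prop where
  omg_pos : ∀ k, 0 < omg k
  omg_mono : ∀ j k, j ≤ k → omg j ≤ omg k
  Y_mem : ∀ k, MemLp (Y k) 2 volume
  Y_eigen : ∀ k, IsEigen N Q (Y k) (omg k)
  Y_ortho : ∀ j k, (∫ x, Y j x * Y k x) = if j = k then (1 : ℝ) else 0
  Y_span : ∀ (Y' : Pt N → ℝ) (w : ℝ), 0 < w → MemLp Y' 2 volume → IsEigen N Q Y' w →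
      Y' ∈ Submodule.span ℝ (Set.range Y)
  Z_mem : ∀ j, InZ N Q (Z j)
  Z_indep : LinearIndependent ℝ Z
  Z_span : ∀ f, InZ N Q f → f ∈ Submodule.span ℝ (Set.range Z)
  E_test : ∀ j, IsTest (E j)
  E_orthoY : ∀ j k, (∫ x, E j x * Y k x) = 0
  E_dualZ : ∀ j k, (∫ x, E j x * Z k x) = if j = k then (1 : ℝ) else 0


/-- The quantity `γ(t) = √(Σ_j ω_j² α_j(t)² + β_j(t)²)`. -/
def gam {p : ℕ} (omg : Fin p → ℝ) (α β : Fin p → ℝ → ℝ) (t : ℝ) : ℝ :=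
  Real.sqrt (∑ j : Fin p, ((omg j) ^ 2 * (α j t) ^ 2 + (β j t) ^ 2))

private lemma mono_aux {f f' : ℝ → ℝ} {a b : ℝ} (hab : a ≤ b)
    (hf : ∀ u ∈ Set.Icc a b, HasDerivWithinAt f (f' u) (Set.Icc a b) u)
    (h0 : ∀ u ∈ Set.Icc a b, 0 ≤ f' u) : f a ≤ f b := by
  rcases eq_or_lt_of_le hab with h | h
  · rw [h]
  · have hmono : MonotoneOn f (Set.Icc a b) := by
      apply monotoneOn_of_hasDerivWithinAt_nonneg (f' := f') (convex_Icc a b)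
        (fun u hu => (hf u hu).continuousWithinAt)
      · intro u hu
        exact (hf u (interior_subset hu)).mono interior_subset
      · intro u hu
        exact h0 u (interior_subset hu)
    exact hmono (Set.left_mem_Icc.mpr hab) (Set.right_mem_Icc.mpr hab) hab

private lemma exp_mul_deriv (c₀ : ℝ) {Z Z' : ℝ → ℝ} {s : Set ℝ} {u : ℝ}
    (h : HasDerivWithinAt Z (Z' u) s u) :
    HasDerivWithinAt (fun t => Z t * Real.exp (c₀ * t))
      (Z' u * Real.exp (c₀ * u) + Z u * (Real.exp (c₀ * u) * c₀)) s u := by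
  have he : HasDerivAt (fun t : ℝ => Real.exp (c₀ * t)) (Real.exp (c₀ * u) * c₀) u := by
    simpa using ((hasDerivAt_id u).const_mul c₀).exp
  exact h.mul he.hasDerivWithinAt

private theorem core_ode (ω₁ : ℝ) (hω : 0 < ω₁) (T₀ : EReal) (hT : 0 < T₀)
    (X Y X' Y' g : ℝ → ℝ) (G : ℝ)
    (hXd : ∀ u : ℝ, 0 ≤ u → (u : EReal) < T₀ → HasDerivWithinAt X (X' u) (Set.Ici 0) u)
    (hYd : ∀ u : ℝ, 0 ≤ u → (u : EReal) < T₀ → HasDerivWithinAt Y (Y' u) (Set.Ici 0) u)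
    (hXnn : ∀ t, 0 ≤ X t) (hYnn : ∀ t, 0 ≤ Y t) (hgnn : ∀ t, 0 ≤ g t)
    (hXY : ∀ t, X t + Y t = 2 * g t ^ 2)
    (hX' : ∀ u : ℝ, 0 ≤ u → (u : EReal) < T₀ → 2 * ω₁ * X u - ω₁ / 2 * g u ^ 2 ≤ X' u)
    (hY' : ∀ u : ℝ, 0 ≤ u → (u : EReal) < T₀ → Y' u ≤ -(2 * ω₁) * Y u + ω₁ / 2 * g u ^ 2)
    (hG : ∀ t : ℝ, 0 ≤ t → (t : EReal) < T₀ → g t ≤ G) :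
    (∫⁻ t in {t : ℝ | 0 ≤ t ∧ (t : EReal) < T₀}, ENNReal.ofReal (g t))
        ≤ ENNReal.ofReal
            ((4 * (∫ s in Set.Ioi (0 : ℝ), Real.exp (-(3 * ω₁ / 8) * s)) + 1) * G) ∧
      (T₀ = ⊤ → Tendsto (fun t : ℝ => Real.exp (ω₁ / 2 * t) * g t) atTop (nhds 0)) := by
  set S : Set ℝ := {t : ℝ | 0 ≤ t ∧ (t : EReal) < T₀} with hSdef
  set c : ℝ := 3 * ω₁ / 2 with hc
  set I : ℝ := ∫ s in Set.Ioi (0 : ℝ), Real.exp (-(3 * ω₁ / 8) * s) with hIdef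
  have hcpos : 0 < c := by rw [hc]; linarith
  have hmemS : ∀ {u t : ℝ}, t ∈ S → 0 ≤ u → u ≤ t → u ∈ S := by
    intro u t ht hu hut
    exact ⟨hu, lt_of_le_of_lt (EReal.coe_le_coe_iff.mpr hut) ht.2⟩
  have h0S : (0 : ℝ) ∈ S := ⟨le_rfl, by exact_mod_cast hT⟩
  have hGnn : 0 ≤ G := (hgnn 0).trans (hG 0 h0S.1 h0S.2)
  have hI0 : 0 ≤ I := setIntegral_nonneg measurableSet_Ioi fun x _ => (Real.exp_pos _).le
  -- transfer of derivatives to compact subintervals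
  have hXdI : ∀ {a b : ℝ}, 0 ≤ a → b ∈ S → ∀ u ∈ Set.Icc a b,
      HasDerivWithinAt X (X' u) (Set.Icc a b) u := by
    intro a b haz hb u hu
    exact (hXd u (haz.trans hu.1)
      (lt_of_le_of_lt (EReal.coe_le_coe_iff.mpr hu.2) hb.2)).mono
      (fun x hx => haz.trans hx.1)
  have hYdI : ∀ {a b : ℝ}, 0 ≤ a → b ∈ S → ∀ u ∈ Set.Icc a b,
      HasDerivWithinAt Y (Y' u) (Set.Icc a b) u := by
    intro a b haz hb u hu
    exact (hYd u (haz.trans hu.1)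
      (lt_of_le_of_lt (EReal.coe_le_coe_iff.mpr hu.2) hb.2)).mono
      (fun x hx => haz.trans hx.1)
  -- Fact 1 : (X - Y) e^{-ct} is monotone on S
  have fact1 : ∀ s t : ℝ, s ∈ S → t ∈ S → s ≤ t →
      (X s - Y s) * Real.exp (-c * s) ≤ (X t - Y t) * Real.exp (-c * t) := by
    intro s t hs ht hst
    refine mono_aux (f := fun u => (X u - Y u) * Real.exp (-c * u))
      (f' := fun u => (X' u - Y' u) * Real.exp (-c * u)
        + (X u - Y u) * (Real.exp (-c * u) * -c)) hst ?_ ?_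
    · intro u hu
      exact exp_mul_deriv (-c) (Z := fun r => X r - Y r) (Z' := fun r => X' r - Y' r)
        (((hXdI hs.1 ht) u hu).sub ((hYdI hs.1 ht) u hu))
    · intro u hu
      have huS : u ∈ S := hmemS ht (hs.1.trans hu.1) hu.2
      have h1 := hX' u huS.1 huS.2
      have h2 := hY' u huS.1 huS.2
      have hkey : 0 ≤ (X' u - Y' u) - c * (X u - Y u) := by
        rw [hc] at *
        nlinarith [hXY u, hYnn u]
      have heq : (X' u - Y' u) * Real.exp (-c * u) + (X u - Y u) * (Real.exp (-c * u) * -c)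
          = Real.exp (-c * u) * ((X' u - Y' u) - c * (X u - Y u)) := by ring
      show 0 ≤ (X' u - Y' u) * Real.exp (-c * u) + (X u - Y u) * (Real.exp (-c * u) * -c)
      rw [heq]
      exact mul_nonneg (Real.exp_pos _).le hkey
  -- Fact 2 : exponential decay of Y where X ≤ Y on an initial segment
  have fact2 : ∀ t, t ∈ S → (∀ u ∈ Set.Icc (0:ℝ) t, X u ≤ Y u) →
      Y t * Real.exp (c * t) ≤ Y 0 := by
    intro t ht hXYle
    have h := mono_aux (f := fun u => -(Y u * Real.exp (c * u)))
      (f' := fun u => -(Y' u * Real.exp (c * u) + Y u * (Real.exp (c * u) * c)))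
      ht.1 ?_ ?_
    · have h0 : Real.exp (c * 0) = 1 := by norm_num
      simp only [h0, mul_one] at h
      linarith
    · intro u hu
      exact (exp_mul_deriv c ((hYdI le_rfl ht) u hu)).neg
    · intro u hu
      have huS : u ∈ S := hmemS ht hu.1 hu.2
      have h2 := hY' u huS.1 huS.2
      have hg2 : g u ^ 2 ≤ Y u := by
        have := hXY u
        have := hXYle u hu
        linarith
      have heq : -(Y' u * Real.exp (c * u) + Y u * (Real.exp (c * u) * c))
          = Real.exp (c * u) * (-(Y' u) - c * Y u) := by ring
      show 0 ≤ -(Y' u * Real.exp (c * u) + Y u * (Real.exp (c * u) * c))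
      rw [heq]
      apply mul_nonneg (Real.exp_pos _).le
      rw [hc] at *
      nlinarith [hYnn u]
  -- Fact 3 : exponential growth of X where Y ≤ X
  have fact3 : ∀ s t : ℝ, s ∈ S → t ∈ S → s ≤ t → (∀ u ∈ Set.Icc s t, Y u ≤ X u) →
      X s * Real.exp (-c * s) ≤ X t * Real.exp (-c * t) := by
    intro s t hs ht hst hYX
    refine mono_aux (f := fun u => X u * Real.exp (-c * u))
      (f' := fun u => X' u * Real.exp (-c * u) + X u * (Real.exp (-c * u) * -c)) hst ?_ ?_
    · intro u hu
      exact exp_mul_deriv (-c) ((hXdI hs.1 ht) u hu)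
    · intro u hu
      have huS : u ∈ S := hmemS ht (hs.1.trans hu.1) hu.2
      have h1 := hX' u huS.1 huS.2
      have hg2 : g u ^ 2 ≤ X u := by
        have := hXY u
        have := hYX u hu
        linarith
      have heq : X' u * Real.exp (-c * u) + X u * (Real.exp (-c * u) * -c)
          = Real.exp (-c * u) * (X' u - c * X u) := by ring
      show 0 ≤ X' u * Real.exp (-c * u) + X u * (Real.exp (-c * u) * -c)
      rw [heq]
      apply mul_nonneg (Real.exp_pos _).le
      rw [hc] at *
      nlinarith [hXnn u]
  -- square root helper
  have hsqrt : ∀ y z : ℝ, 0 ≤ y → y ^ 2 ≤ 2 * G ^ 2 * Real.exp z →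
      y ≤ 2 * G * Real.exp (z / 2) := by
    intro y z hy h
    have hee : Real.exp (z / 2) * Real.exp (z / 2) = Real.exp z := by
      rw [← Real.exp_add]; congr 1; ring
    have hz : (2 * G * Real.exp (z / 2)) ^ 2 = 4 * G ^ 2 * Real.exp z := by
      calc (2 * G * Real.exp (z / 2)) ^ 2
          = 4 * G ^ 2 * (Real.exp (z / 2) * Real.exp (z / 2)) := by ring
        _ = 4 * G ^ 2 * Real.exp z := by rw [hee]
    have h2 : y ^ 2 ≤ (2 * G * Real.exp (z / 2)) ^ 2 := by
      rw [hz]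
      nlinarith [Real.exp_pos z, sq_nonneg G]
    calc y = Real.sqrt (y ^ 2) := (Real.sqrt_sq hy).symm
      _ ≤ Real.sqrt ((2 * G * Real.exp (z / 2)) ^ 2) := Real.sqrt_le_sqrt h2
      _ = 2 * G * Real.exp (z / 2) := Real.sqrt_sq (by positivity)
  -- decay bound on initial segments where X ≤ Y
  have decayBound : ∀ t, t ∈ S → (∀ u ∈ Set.Icc (0:ℝ) t, X u ≤ Y u) →
      g t ≤ 2 * G * Real.exp (-(c * t) / 2) := by
    intro t ht hXYle
    have h2 := fact2 t ht hXYle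
    have hY0 : Y 0 ≤ 2 * G ^ 2 := by
      have h3 := hXY 0
      have h4 := hG 0 h0S.1 h0S.2
      have h5 := hgnn 0
      have h6 := hXnn 0
      nlinarith
    have hgt : g t ^ 2 ≤ Y t := by
      have := hXY t
      have := hXYle t ⟨ht.1, le_rfl⟩
      linarith
    have hYt : g t ^ 2 ≤ 2 * G ^ 2 * Real.exp (-(c * t)) := by
      have he : (0:ℝ) < Real.exp (c * t) := Real.exp_pos _
      rw [Real.exp_neg, ← div_eq_mul_inv, le_div_iff₀ he]
      nlinarith
    exact hsqrt (g t) (-(c * t)) (hgnn t) hYt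
  -- positivity is preserved forward, and yields Y ≤ X on the interval
  have posPrefix : ∀ s t : ℝ, s ∈ S → t ∈ S → s ≤ t → 0 < X s - Y s →
      ∀ u ∈ Set.Icc s t, Y u ≤ X u := by
    intro s t hs ht hst hpos u hu
    have huS : u ∈ S := hmemS ht (hs.1.trans hu.1) hu.2
    have h1 := fact1 s u hs huS hu.1
    have h2 : 0 < (X s - Y s) * Real.exp (-c * s) :=
      mul_pos hpos (Real.exp_pos _)
    nlinarith [Real.exp_pos (-c * u)]
  -- growth bound: if X > Y at s, then g s is exponentially small compared to later times
  have growBound : ∀ s, s ∈ S → 0 < X s - Y s → ∀ u, u ∈ S → s ≤ u →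
      g s ^ 2 ≤ 2 * G ^ 2 * Real.exp (-(c * (u - s))) := by
    intro s hs hpos u huS hsu
    have hprefix := posPrefix s u hs huS hsu hpos
    have h3 := fact3 s u hs huS hsu hprefix
    have hXs : X s ≤ X u * Real.exp (-(c * (u - s))) := by
      have he : (0:ℝ) < Real.exp (c * s) := Real.exp_pos _
      have k1 : Real.exp (-c * s) * Real.exp (c * s) = 1 := by
        rw [← Real.exp_add]; norm_num
      have k2 : Real.exp (-c * u) * Real.exp (c * s) = Real.exp (-(c * (u - s))) := by
        rw [← Real.exp_add]; congr 1; ring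
      calc X s = X s * Real.exp (-c * s) * Real.exp (c * s) := by
            rw [mul_assoc, k1, mul_one]
        _ ≤ X u * Real.exp (-c * u) * Real.exp (c * s) :=
            mul_le_mul_of_nonneg_right h3 he.le
        _ = X u * Real.exp (-(c * (u - s))) := by rw [mul_assoc, k2]
    have hgs2 : g s ^ 2 ≤ X s := by
      have := hXY s
      have := hprefix s ⟨le_rfl, hsu⟩
      linarith
    have hXu : X u ≤ 2 * G ^ 2 := by
      have h4 := hXY u
      have h5 := hG u huS.1 huS.2
      have h6 := hgnn u
      have h7 := hYnn u
      nlinarith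
    have : X u * Real.exp (-(c * (u - s))) ≤ 2 * G ^ 2 * Real.exp (-(c * (u - s))) :=
      mul_le_mul_of_nonneg_right hXu (Real.exp_pos _).le
    linarith
  -- representation of S
  have hrep : (T₀ = ⊤ ∧ S = Set.Ici (0:ℝ)) ∨
      (∃ b : ℝ, 0 < b ∧ T₀ = (b : EReal) ∧ S = Set.Ico 0 b) := by
    by_cases h : T₀ = ⊤
    · left
      refine ⟨h, ?_⟩
      rw [hSdef]
      ext t
      simp [h, EReal.coe_lt_top]
    · right
      have hbot : T₀ ≠ ⊥ := by
        intro hbt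
        rw [hbt] at hT
        simp at hT
      obtain ⟨b, hb⟩ : ∃ b : ℝ, T₀ = (b : EReal) := by
        lift T₀ to ℝ using ⟨h, hbot⟩ with b
        exact ⟨b, rfl⟩
      refine ⟨b, ?_, hb, ?_⟩
      · rw [hb] at hT; exact_mod_cast hT
      · rw [hSdef]; ext t
        simp only [Set.mem_setOf_eq, Set.mem_Ico, hb, EReal.coe_lt_coe_iff]
  have hFcont : Continuous fun t : ℝ => 2 * G * Real.exp (-(3 * ω₁ / 8) * t) :=
    continuous_const.mul (Real.continuous_exp.comp (continuous_const.mul continuous_id))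
  have hFmeas : Measurable fun t : ℝ => ENNReal.ofReal (2 * G * Real.exp (-(3 * ω₁ / 8) * t)) :=
    hFcont.measurable.ennreal_ofReal
  have hIci : (∫⁻ t in Set.Ici (0:ℝ), ENNReal.ofReal (2 * G * Real.exp (-(3 * ω₁ / 8) * t)))
      = ENNReal.ofReal (2 * G * I) := by
    have hint : IntegrableOn (fun t : ℝ => 2 * G * Real.exp (-(3 * ω₁ / 8) * t))
        (Set.Ici 0) := by
      rw [integrableOn_Ici_iff_integrableOn_Ioi]
      exact (exp_neg_integrableOn_Ioi 0 (by linarith : (0:ℝ) < 3 * ω₁ / 8)).const_mul (2 * G)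
    rw [← ofReal_integral_eq_lintegral_ofReal hint (ae_of_all _ fun t => by positivity)]
    congr 1
    rw [integral_Ici_eq_integral_Ioi, MeasureTheory.integral_const_mul, ← hIdef]
  by_cases hcase : ∀ t ∈ S, X t - Y t ≤ 0
  · -- Case A : purely decaying
    have hbd : ∀ t ∈ S, g t ≤ 2 * G * Real.exp (-(c * t) / 2) := fun t ht =>
      decayBound t ht (fun u hu => by
        have huS : u ∈ S := hmemS ht hu.1 hu.2
        linarith [hcase u huS])
    constructor
    · calc (∫⁻ t in S, ENNReal.ofReal (g t))
          ≤ ∫⁻ t in S, ENNReal.ofReal (2 * G * Real.exp (-(3 * ω₁ / 8) * t)) := by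
            apply setLIntegral_mono hFmeas
            intro t ht
            apply ENNReal.ofReal_le_ofReal
            refine (hbd t ht).trans ?_
            have hexp : Real.exp (-(c * t) / 2) ≤ Real.exp (-(3 * ω₁ / 8) * t) := by
              apply Real.exp_le_exp.mpr
              rw [hc]
              nlinarith [ht.1]
            nlinarith [Real.exp_pos (-(3 * ω₁ / 8) * t), hGnn]
        _ ≤ ∫⁻ t in Set.Ici (0:ℝ), ENNReal.ofReal (2 * G * Real.exp (-(3 * ω₁ / 8) * t)) :=
            lintegral_mono_set (fun t ht => ht.1)
        _ = ENNReal.ofReal (2 * G * I) := hIci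
        _ ≤ ENNReal.ofReal ((4 * I + 1) * G) := ENNReal.ofReal_le_ofReal (by nlinarith)
    · intro htop
      have hbd' : ∀ t : ℝ, 0 ≤ t →
          Real.exp (ω₁ / 2 * t) * g t ≤ 2 * G * Real.exp (-(ω₁ / 4) * t) := by
        intro t ht0
        have htS : t ∈ S := ⟨ht0, by rw [htop]; exact EReal.coe_lt_top t⟩
        have h1 := hbd t htS
        have h2 : Real.exp (ω₁ / 2 * t) * (2 * G * Real.exp (-(c * t) / 2))
            = 2 * G * Real.exp (-(ω₁ / 4) * t) := by
          have h3 : Real.exp (ω₁ / 2 * t) * Real.exp (-(c * t) / 2)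
              = Real.exp (-(ω₁ / 4) * t) := by
            rw [← Real.exp_add]; congr 1; rw [hc]; ring
          calc Real.exp (ω₁ / 2 * t) * (2 * G * Real.exp (-(c * t) / 2))
              = 2 * G * (Real.exp (ω₁ / 2 * t) * Real.exp (-(c * t) / 2)) := by ring
            _ = 2 * G * Real.exp (-(ω₁ / 4) * t) := by rw [h3]
        calc Real.exp (ω₁ / 2 * t) * g t
            ≤ Real.exp (ω₁ / 2 * t) * (2 * G * Real.exp (-(c * t) / 2)) :=
              mul_le_mul_of_nonneg_left h1 (Real.exp_pos _).le
          _ = _ := h2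
      have hU : Tendsto (fun t : ℝ => 2 * G * Real.exp (-(ω₁ / 4) * t)) atTop (nhds 0) := by
        have l1 : Tendsto (fun t : ℝ => -(ω₁ / 4) * t) atTop atBot :=
          tendsto_id.const_mul_atTop_of_neg (by linarith)
        have l2 := Real.tendsto_exp_atBot.comp l1
        have l3 := l2.const_mul (2 * G)
        simpa [Function.comp] using l3
      exact squeeze_zero'
        (Filter.eventually_atTop.mpr ⟨0, fun t _ => mul_nonneg (Real.exp_pos _).le (hgnn t)⟩)
        (Filter.eventually_atTop.mpr ⟨0, fun t ht => hbd' t ht⟩) hU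
  · -- Case B : eventually growing; T₀ must be finite
    push_neg at hcase
    obtain ⟨s₀, hs₀S, hs₀⟩ := hcase
    have hnotTop : T₀ ≠ ⊤ := by
      intro htop
      have hg0 : 0 < g s₀ ^ 2 := by nlinarith [hXY s₀, hYnn s₀]
      have hlim : Tendsto (fun u : ℝ => 2 * G ^ 2 * Real.exp (-(c * (u - s₀)))) atTop
          (nhds 0) := by
        have l0 : Tendsto (fun u : ℝ => u - s₀) atTop atTop :=
          tendsto_atTop_add_const_right atTop (-s₀) tendsto_id
        have l1 : Tendsto (fun u : ℝ => -(c * (u - s₀))) atTop atBot := by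
          have := l0.const_mul_atTop_of_neg (neg_lt_zero.mpr hcpos)
          simpa [neg_mul] using this
        have l2 := Real.tendsto_exp_atBot.comp l1
        have l3 := l2.const_mul (2 * G ^ 2)
        simpa [Function.comp] using l3
      have hev : ∀ᶠ u in atTop, g s₀ ^ 2 ≤ 2 * G ^ 2 * Real.exp (-(c * (u - s₀))) := by
        filter_upwards [eventually_ge_atTop s₀] with u hu
        exact growBound s₀ hs₀S hs₀ u
          ⟨hs₀S.1.trans hu, by rw [htop]; exact EReal.coe_lt_top u⟩ hu
      have := ge_of_tendsto hlim hev
      linarith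
    obtain ⟨b, hbpos, hTb, hSIco⟩ : ∃ b : ℝ, 0 < b ∧ T₀ = (b : EReal) ∧ S = Set.Ico 0 b := by
      rcases hrep with ⟨htop, _⟩ | h
      · exact absurd htop hnotTop
      · exact h
    have hF2cont : Continuous fun t : ℝ => 2 * G * Real.exp (-(3 * ω₁ / 8) * (b - t)) :=
      continuous_const.mul
        (Real.continuous_exp.comp (continuous_const.mul (continuous_const.sub continuous_id)))
    have hF2meas : Measurable fun t : ℝ =>
        ENNReal.ofReal (2 * G * Real.exp (-(3 * ω₁ / 8) * (b - t))) :=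
      hF2cont.measurable.ennreal_ofReal
    constructor
    · have hbd : ∀ t ∈ S, g t ≤ 2 * G * Real.exp (-(3 * ω₁ / 8) * t)
          + 2 * G * Real.exp (-(3 * ω₁ / 8) * (b - t)) := by
        intro t ht
        have ht0 : 0 ≤ t := ht.1
        have htb : t < b := by
          have := ht
          rw [hSIco] at this
          exact this.2
        by_cases hφ : 0 < X t - Y t
        · have hu : (t + b) / 2 ∈ S := by
            rw [hSIco]
            constructor
            · linarith
            · linarith
          have h2 := growBound t ht hφ ((t + b) / 2) hu (by linarith)
          have h3 := hsqrt (g t) _ (hgnn t) h2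
          have he : -(c * ((t + b) / 2 - t)) / 2 = -(3 * ω₁ / 8) * (b - t) := by
            rw [hc]; ring
          rw [he] at h3
          have hnn1 : 0 ≤ 2 * G * Real.exp (-(3 * ω₁ / 8) * t) := by positivity
          linarith
        · have hXle : ∀ u ∈ Set.Icc (0:ℝ) t, X u ≤ Y u := by
            intro u hu
            by_contra hcon
            push_neg at hcon
            have huS : u ∈ S := hmemS ht hu.1 hu.2
            have h1 := fact1 u t huS ht hu.2
            have h2 : 0 < (X u - Y u) * Real.exp (-c * u) :=
              mul_pos (by linarith) (Real.exp_pos _)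
            have h3 : (X t - Y t) * Real.exp (-c * t) ≤ 0 :=
              mul_nonpos_of_nonpos_of_nonneg (by linarith [not_lt.mp hφ]) (Real.exp_pos _).le
            linarith
          have h1 := decayBound t ht hXle
          have hexp : Real.exp (-(c * t) / 2) ≤ Real.exp (-(3 * ω₁ / 8) * t) := by
            apply Real.exp_le_exp.mpr
            rw [hc]
            nlinarith
          have hnn2 : 0 ≤ 2 * G * Real.exp (-(3 * ω₁ / 8) * (b - t)) := by positivity
          nlinarith [Real.exp_pos (-(3 * ω₁ / 8) * t)]
      rw [hSIco]
      calc (∫⁻ t in Set.Ico (0:ℝ) b, ENNReal.ofReal (g t))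
          ≤ ∫⁻ t in Set.Ico (0:ℝ) b,
              (ENNReal.ofReal (2 * G * Real.exp (-(3 * ω₁ / 8) * t))
                + ENNReal.ofReal (2 * G * Real.exp (-(3 * ω₁ / 8) * (b - t)))) := by
            apply setLIntegral_mono (hFmeas.add hF2meas)
            intro t ht
            have htS : t ∈ S := by rw [hSIco]; exact ht
            calc ENNReal.ofReal (g t)
                ≤ ENNReal.ofReal (2 * G * Real.exp (-(3 * ω₁ / 8) * t)
                    + 2 * G * Real.exp (-(3 * ω₁ / 8) * (b - t))) :=
                  ENNReal.ofReal_le_ofReal (hbd t htS)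
              _ ≤ _ := ENNReal.ofReal_add_le
        _ = (∫⁻ t in Set.Ico (0:ℝ) b, ENNReal.ofReal (2 * G * Real.exp (-(3 * ω₁ / 8) * t)))
              + ∫⁻ t in Set.Ico (0:ℝ) b,
                  ENNReal.ofReal (2 * G * Real.exp (-(3 * ω₁ / 8) * (b - t))) :=
            lintegral_add_left hFmeas _
        _ ≤ ENNReal.ofReal (2 * G * I) + ENNReal.ofReal (2 * G * I) := by
            apply add_le_add
            · exact le_trans (lintegral_mono_set Set.Ico_subset_Ici_self) hIci.le
            · have hpre : (fun x : ℝ => b - x) ⁻¹' (Set.Ioc 0 b) = Set.Ico 0 b := by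
                ext x
                simp only [Set.mem_preimage, Set.mem_Ioc, Set.mem_Ico]
                constructor
                · rintro ⟨h1, h2⟩
                  exact ⟨by linarith, by linarith⟩
                · rintro ⟨h1, h2⟩
                  exact ⟨by linarith, by linarith⟩
              have hmp : MeasurePreserving (fun x : ℝ => b - x) volume volume :=
                Measure.measurePreserving_sub_left volume b
              have hemb : MeasurableEmbedding (fun x : ℝ => b - x) :=
                (MeasurableEquiv.subLeft b).measurableEmbedding
              calc (∫⁻ t in Set.Ico (0:ℝ) b,
                    ENNReal.ofReal (2 * G * Real.exp (-(3 * ω₁ / 8) * (b - t))))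
                  = ∫⁻ t in (fun x : ℝ => b - x) ⁻¹' (Set.Ioc 0 b),
                      ENNReal.ofReal (2 * G * Real.exp (-(3 * ω₁ / 8) * (b - t))) := by
                    rw [hpre]
                _ = ∫⁻ s in Set.Ioc (0:ℝ) b,
                      ENNReal.ofReal (2 * G * Real.exp (-(3 * ω₁ / 8) * s)) :=
                    hmp.setLIntegral_comp_preimage_emb hemb
                      (fun s => ENNReal.ofReal (2 * G * Real.exp (-(3 * ω₁ / 8) * s))) (Set.Ioc 0 b)
                _ ≤ ∫⁻ s in Set.Ici (0:ℝ),
                      ENNReal.ofReal (2 * G * Real.exp (-(3 * ω₁ / 8) * s)) :=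
                    lintegral_mono_set (fun x hx => hx.1.le)
                _ = ENNReal.ofReal (2 * G * I) := hIci
        _ ≤ ENNReal.ofReal ((4 * I + 1) * G) := by
            rw [← ENNReal.ofReal_add (by positivity) (by positivity)]
            exact ENNReal.ofReal_le_ofReal (by nlinarith)
    · intro htop
      exact absurd htop hnotTop

set_option maxHeartbeats 1000000

/-- Exponential dichotomy for approximate solutions of the linear
system `α_j' = β_j`, `β_j' = ω_j² α_j`: if the errors are at most `ε₃ γ(t)` and `γ` is
bounded, then `∫₀^{T₀} γ ≤ C₃ ‖γ‖_∞`, and if `T₀ = ∞` then `e^{ω₁ t/2} γ(t) → 0`. -/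
theorem ode_exponential_dichotomy {p : ℕ} (hp : 0 < p) (omg : Fin p → ℝ)
    (hpos : ∀ j, 0 < omg j) (hmono : StrictMono omg) :
    ∃ ε₃ C₃ : ℝ, 0 < ε₃ ∧ 0 < C₃ ∧
      ∀ T₀ : EReal, 0 < T₀ →
      ∀ α β α' β' : Fin p → ℝ → ℝ,
      (∀ (j : Fin p) (t : ℝ), 0 ≤ t → (t : EReal) < T₀ →
        HasDerivWithinAt (α j) (α' j t) (Set.Ici 0) t ∧
        HasDerivWithinAt (β j) (β' j t) (Set.Ici 0) t) →
      (∀ j : Fin p,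
        ContinuousOn (α' j) {t : ℝ | 0 ≤ t ∧ (t : EReal) < T₀} ∧
        ContinuousOn (β' j) {t : ℝ | 0 ≤ t ∧ (t : EReal) < T₀}) →
      ∀ G : ℝ, (∀ t : ℝ, 0 ≤ t → (t : EReal) < T₀ → gam omg α β t ≤ G) →
      (∀ (j : Fin p) (t : ℝ), 0 ≤ t → (t : EReal) < T₀ →
        |α' j t - β j t| ≤ ε₃ * gam omg α β t) →
      (∀ (j : Fin p) (t : ℝ), 0 ≤ t → (t : EReal) < T₀ →
        |β' j t - (omg j) ^ 2 * α j t| ≤ ε₃ * gam omg α β t) →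
      (∫⁻ t in {t : ℝ | 0 ≤ t ∧ (t : EReal) < T₀}, ENNReal.ofReal (gam omg α β t))
          ≤ ENNReal.ofReal (C₃ * G) ∧
        (T₀ = ⊤ →
          Tendsto (fun t : ℝ => Real.exp (omg ⟨0, hp⟩ / 2 * t) * gam omg α β t)
            atTop (nhds 0)) := by
  have hpm : p - 1 < p := by omega
  set ω₁ : ℝ := omg ⟨0, hp⟩ with hω₁def
  set W : ℝ := omg ⟨p - 1, hpm⟩ + 1 with hWdef
  set ε : ℝ := ω₁ / (2 * (4 * p * W)) with hεdef
  have hω₁ : 0 < ω₁ := hpos _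
  have hW : 0 < W := by
    have := hpos ⟨p - 1, hpm⟩
    rw [hWdef]; linarith
  have hpR : (0:ℝ) < p := by exact_mod_cast hp
  have hKpos : (0:ℝ) < 2 * (4 * p * W) := by positivity
  have hε : 0 < ε := by rw [hεdef]; positivity
  refine ⟨ε, 4 * (∫ s in Set.Ioi (0 : ℝ), Real.exp (-(3 * ω₁ / 8) * s)) + 1, hε, ?_, ?_⟩
  · have hI0 : 0 ≤ ∫ s in Set.Ioi (0 : ℝ), Real.exp (-(3 * ω₁ / 8) * s) :=
      setIntegral_nonneg measurableSet_Ioi fun x _ => (Real.exp_pos _).le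
    linarith
  intro T₀ hT₀ α β α' β' hd _hcont G hG ha hb
  have hγnn : ∀ t, 0 ≤ gam omg α β t := fun t => Real.sqrt_nonneg _
  have hγsq : ∀ t, gam omg α β t ^ 2
      = ∑ j : Fin p, ((omg j) ^ 2 * (α j t) ^ 2 + (β j t) ^ 2) := by
    intro t
    unfold gam
    exact Real.sq_sqrt (Finset.sum_nonneg fun j _ => by positivity)
  have hω₁le : ∀ j : Fin p, ω₁ ≤ omg j := by
    intro j
    apply hmono.monotone
    simp [Fin.le_def]
  have hωW : ∀ j : Fin p, omg j + 1 ≤ W := by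
    intro j
    have : omg j ≤ omg ⟨p - 1, hpm⟩ := by
      apply hmono.monotone
      simp only [Fin.le_def]
      omega
    rw [hWdef]; linarith
  have hεval : (p:ℝ) * (4 * W * ε) = ω₁ / 2 := by
    rw [hεdef]
    field_simp
  -- bound on |ξ| and |η|
  have hξbound : ∀ (j : Fin p) (u : ℝ) (σ : ℝ), σ = 1 ∨ σ = -1 →
      |omg j * α j u + σ * β j u| ≤ 2 * gam omg α β u := by
    intro j u σ hσ
    have hsingle : (omg j) ^ 2 * (α j u) ^ 2 + (β j u) ^ 2
        ≤ ∑ i : Fin p, ((omg i) ^ 2 * (α i u) ^ 2 + (β i u) ^ 2) :=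
      Finset.single_le_sum (f := fun i : Fin p => (omg i) ^ 2 * (α i u) ^ 2 + (β i u) ^ 2)
        (fun i _ => by positivity) (Finset.mem_univ j)
    have h4 : (omg j * α j u + σ * β j u) ^ 2 ≤ (2 * gam omg α β u) ^ 2 := by
      have hγ2 := hγsq u
      rcases hσ with h | h <;> rw [h] <;>
        nlinarith [sq_nonneg (omg j * α j u - β j u), sq_nonneg (omg j * α j u + β j u),
          hγnn u, sq_nonneg (gam omg α β u)]
    calc |omg j * α j u + σ * β j u|
        = Real.sqrt ((omg j * α j u + σ * β j u) ^ 2) := (Real.sqrt_sq_eq_abs _).symm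
      _ ≤ Real.sqrt ((2 * gam omg α β u) ^ 2) := Real.sqrt_le_sqrt h4
      _ = 2 * gam omg α β u := Real.sqrt_sq (by have := hγnn u; linarith)
  apply core_ode ω₁ hω₁ T₀ hT₀
    (fun t => ∑ j : Fin p, (omg j * α j t + β j t) ^ 2)
    (fun t => ∑ j : Fin p, (omg j * α j t - β j t) ^ 2)
    (fun u => ∑ j : Fin p, 2 * (omg j * α j u + β j u) * (omg j * α' j u + β' j u))
    (fun u => ∑ j : Fin p, 2 * (omg j * α j u - β j u) * (omg j * α' j u - β' j u))
    (gam omg α β) G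
  -- derivatives
  · intro u h0 h1
    apply HasDerivWithinAt.fun_sum
    intro j _
    have h := (((hd j u h0 h1).1.const_mul (omg j)).fun_add (hd j u h0 h1).2).fun_pow 2
    refine h.congr_deriv ?_
    norm_num
  · intro u h0 h1
    apply HasDerivWithinAt.fun_sum
    intro j _
    have h := (((hd j u h0 h1).1.const_mul (omg j)).fun_sub (hd j u h0 h1).2).fun_pow 2
    refine h.congr_deriv ?_
    norm_num
  · exact fun t => Finset.sum_nonneg fun j _ => sq_nonneg _
  · exact fun t => Finset.sum_nonneg fun j _ => sq_nonneg _
  · exact hγnn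
  · intro t
    rw [hγsq t, Finset.mul_sum, ← Finset.sum_add_distrib]
    exact Finset.sum_congr rfl fun j _ => by ring
  · -- lower bound for X'
    intro u h0 h1
    have hterm : ∀ j : Fin p,
        2 * ω₁ * (omg j * α j u + β j u) ^ 2 - 4 * W * ε * gam omg α β u ^ 2
          ≤ 2 * (omg j * α j u + β j u) * (omg j * α' j u + β' j u) := by
      intro j
      have hξ := hξbound j u 1 (Or.inl rfl)
      rw [one_mul] at hξ
      obtain ⟨hx1, hx2⟩ := abs_le.mp hξ
      have hωj : 0 < omg j := hpos j
      have he : |omg j * (α' j u - β j u) + (β' j u - (omg j) ^ 2 * α j u)|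
          ≤ W * (ε * gam omg α β u) := by
        calc |omg j * (α' j u - β j u) + (β' j u - (omg j) ^ 2 * α j u)|
            ≤ |omg j * (α' j u - β j u)| + |β' j u - (omg j) ^ 2 * α j u| := abs_add_le _ _
          _ = omg j * |α' j u - β j u| + |β' j u - (omg j) ^ 2 * α j u| := by
              rw [abs_mul, abs_of_pos hωj]
          _ ≤ omg j * (ε * gam omg α β u) + ε * gam omg α β u := by
              refine add_le_add (mul_le_mul_of_nonneg_left (ha j u h0 h1) hωj.le) (hb j u h0 h1)
          _ ≤ W * (ε * gam omg α β u) := by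
              nlinarith [mul_nonneg hε.le (hγnn u), hωW j]
      obtain ⟨he1, he2⟩ := abs_le.mp he
      have hrw : omg j * α' j u + β' j u
          = omg j * (omg j * α j u + β j u)
            + (omg j * (α' j u - β j u) + (β' j u - (omg j) ^ 2 * α j u)) := by ring
      rw [hrw]
      nlinarith [mul_nonneg (by linarith : (0:ℝ) ≤ 2 * gam omg α β u - (omg j * α j u + β j u))
          (by linarith : (0:ℝ) ≤ W * (ε * gam omg α β u)
            - (omg j * (α' j u - β j u) + (β' j u - (omg j) ^ 2 * α j u))),
        mul_nonneg (by linarith : (0:ℝ) ≤ 2 * gam omg α β u + (omg j * α j u + β j u))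
          (by linarith : (0:ℝ) ≤ W * (ε * gam omg α β u)
            + (omg j * (α' j u - β j u) + (β' j u - (omg j) ^ 2 * α j u))),
        mul_nonneg (sub_nonneg.mpr (hω₁le j)) (sq_nonneg (omg j * α j u + β j u))]
    calc 2 * ω₁ * (∑ j : Fin p, (omg j * α j u + β j u) ^ 2) - ω₁ / 2 * gam omg α β u ^ 2
        = ∑ j : Fin p,
            (2 * ω₁ * (omg j * α j u + β j u) ^ 2 - 4 * W * ε * gam omg α β u ^ 2) := by
          rw [Finset.sum_sub_distrib, ← Finset.mul_sum, Finset.sum_const, Finset.card_univ,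
            Fintype.card_fin, nsmul_eq_mul]
          have h5 : (p:ℝ) * (4 * W * ε * gam omg α β u ^ 2)
              = ω₁ / 2 * gam omg α β u ^ 2 := by
            calc (p:ℝ) * (4 * W * ε * gam omg α β u ^ 2)
                = ((p:ℝ) * (4 * W * ε)) * gam omg α β u ^ 2 := by ring
              _ = ω₁ / 2 * gam omg α β u ^ 2 := by rw [hεval]
          linarith [h5]
      _ ≤ _ := Finset.sum_le_sum fun j _ => hterm j
  · -- upper bound for Y'
    intro u h0 h1
    have hterm : ∀ j : Fin p,
        2 * (omg j * α j u - β j u) * (omg j * α' j u - β' j u)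
          ≤ -(2 * ω₁) * (omg j * α j u - β j u) ^ 2 + 4 * W * ε * gam omg α β u ^ 2 := by
      intro j
      have hξ := hξbound j u (-1) (Or.inr rfl)
      have hξ' : |omg j * α j u - β j u| ≤ 2 * gam omg α β u := by
        have : omg j * α j u + (-1) * β j u = omg j * α j u - β j u := by ring
        rwa [this] at hξ
      obtain ⟨hx1, hx2⟩ := abs_le.mp hξ'
      have hωj : 0 < omg j := hpos j
      have he : |omg j * (α' j u - β j u) - (β' j u - (omg j) ^ 2 * α j u)|
          ≤ W * (ε * gam omg α β u) := by
        calc |omg j * (α' j u - β j u) - (β' j u - (omg j) ^ 2 * α j u)|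
            ≤ |omg j * (α' j u - β j u)| + |β' j u - (omg j) ^ 2 * α j u| := abs_sub _ _
          _ = omg j * |α' j u - β j u| + |β' j u - (omg j) ^ 2 * α j u| := by
              rw [abs_mul, abs_of_pos hωj]
          _ ≤ omg j * (ε * gam omg α β u) + ε * gam omg α β u := by
              refine add_le_add (mul_le_mul_of_nonneg_left (ha j u h0 h1) hωj.le) (hb j u h0 h1)
          _ ≤ W * (ε * gam omg α β u) := by
              nlinarith [mul_nonneg hε.le (hγnn u), hωW j]
      obtain ⟨he1, he2⟩ := abs_le.mp he
      have hrw : omg j * α' j u - β' j u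
          = -(omg j * (omg j * α j u - β j u))
            + (omg j * (α' j u - β j u) - (β' j u - (omg j) ^ 2 * α j u)) := by ring
      rw [hrw]
      nlinarith [mul_nonneg (by linarith : (0:ℝ) ≤ 2 * gam omg α β u - (omg j * α j u - β j u))
          (by linarith : (0:ℝ) ≤ W * (ε * gam omg α β u)
            - (omg j * (α' j u - β j u) - (β' j u - (omg j) ^ 2 * α j u))),
        mul_nonneg (by linarith : (0:ℝ) ≤ 2 * gam omg α β u + (omg j * α j u - β j u))
          (by linarith : (0:ℝ) ≤ W * (ε * gam omg α β u)
            + (omg j * (α' j u - β j u) - (β' j u - (omg j) ^ 2 * α j u))),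
        mul_nonneg (sub_nonneg.mpr (hω₁le j)) (sq_nonneg (omg j * α j u - β j u))]
    calc (∑ j : Fin p, 2 * (omg j * α j u - β j u) * (omg j * α' j u - β' j u))
        ≤ ∑ j : Fin p,
            (-(2 * ω₁) * (omg j * α j u - β j u) ^ 2 + 4 * W * ε * gam omg α β u ^ 2) :=
          Finset.sum_le_sum fun j _ => hterm j
      _ = -(2 * ω₁) * (∑ j : Fin p, (omg j * α j u - β j u) ^ 2)
            + ω₁ / 2 * gam omg α β u ^ 2 := by
          rw [Finset.sum_add_distrib, ← Finset.mul_sum, Finset.sum_const, Finset.card_univ,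
            Fintype.card_fin, nsmul_eq_mul]
          have h5 : (p:ℝ) * (4 * W * ε * gam omg α β u ^ 2)
              = ω₁ / 2 * gam omg α β u ^ 2 := by
            calc (p:ℝ) * (4 * W * ε * gam omg α β u ^ 2)
                = ((p:ℝ) * (4 * W * ε)) * gam omg α β u ^ 2 := by ring
              _ = ω₁ / 2 * gam omg α β u ^ 2 := by rw [hεval]
          linarith [h5]
  · exact hG


end
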